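/- Let Y and W be pointed metric spaces and T : Y → W a base-point-preserving Lipschitz map. Then the linearization T̃ : F(Y) → F(W) is p-summing if and only if there is a constant K > 0 such that for all finite families (x_j^i), (y_j^i) in Y (1 ≤ j ≤ m₁, 1 ≤ i ≤ m₂) one has (Σ_{j=1}^{m₁} ‖Σ_{i=1}^{m₂} δ_W(T x_j^i) − δ_W(T y_j^i)‖^p)^{1/p} ≤ K sup_{s ∈ B_{Y^#}} (Σ_{j=1}^{m₁} |Σ_{i=1}^{m₂} s(x_j^i) − s(y_j^i)|^p)^{1/p}. -/

import Mathlib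

open scoped TensorProduct
open NormedSpace Finset

noncomputable section

/-- The strong `ℓ_p^m` norm of a finite family in a normed space. -/
def strongLp {E : Type*} [NormedAddCommGroup E] (p : ℝ) {m : ℕ} (x : Fin m → E) : ℝ :=
  (∑ j, ‖x j‖ ^ p) ^ (1 / p)

/-- The weak `ℓ_p^{m,w}` norm of a finite family in a normed space. -/
def weakLp {E : Type*} [NormedAddCommGroup E] [NormedSpace ℝ E] (p : ℝ) {m : ℕ}
    (x : Fin m → E) : ℝ :=
  sSup {r : ℝ | ∃ φ : StrongDual ℝ E, ‖φ‖ ≤ 1 ∧ r = (∑ j, |φ (x j)| ^ p) ^ (1 / p)}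

/-- A continuous linear operator is `p`-summing. -/
def IsPSumming {E F : Type*} [NormedAddCommGroup E] [NormedSpace ℝ E]
    [NormedAddCommGroup F] [NormedSpace ℝ F] (p : ℝ) (u : E →L[ℝ] F) : Prop :=
  ∃ K > 0, ∀ (m : ℕ) (x : Fin m → E),
    strongLp p (fun j => u (x j)) ≤ K * weakLp p x

/-- A continuous linear operator is (Cohen) strongly `p`-summing (`q` is the conjugate of `p`). -/
def IsStronglyPSumming {E F : Type*} [NormedAddCommGroup E] [NormedSpace ℝ E]
    [NormedAddCommGroup F] [NormedSpace ℝ F] (p q : ℝ) (u : E →L[ℝ] F) : Prop :=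
  ∃ K > 0, ∀ (m : ℕ) (x : Fin m → E) (φ : Fin m → StrongDual ℝ F),
    ∑ j, |φ j (u (x j))| ≤ K * strongLp p x * weakLp q φ

/-- A continuous linear operator is (Cohen) `p`-nuclear (`q` is the conjugate of `p`). -/
def IsPNuclear {E F : Type*} [NormedAddCommGroup E] [NormedSpace ℝ E]
    [NormedAddCommGroup F] [NormedSpace ℝ F] (p q : ℝ) (u : E →L[ℝ] F) : Prop :=
  ∃ K > 0, ∀ (m : ℕ) (x : Fin m → E) (φ : Fin m → StrongDual ℝ F),
    ∑ j, |φ j (u (x j))| ≤ K * weakLp p x * weakLp q φ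

/-- The Chevet–Saphar norm `d_p` on a tensor product (`q` is the conjugate of `p`):
infimum over all finite representations of `z`. -/
def dpNorm {E G : Type*} [NormedAddCommGroup E] [NormedSpace ℝ E]
    [NormedAddCommGroup G] [NormedSpace ℝ G] (p q : ℝ) (z : TensorProduct ℝ E G) : ℝ :=
  sInf {r : ℝ | ∃ (m : ℕ) (n : Fin m → E) (h : Fin m → G),
    z = ∑ j, n j ⊗ₜ[ℝ] h j ∧ r = weakLp p n * strongLp q h}

/-- The Chevet–Saphar norm `g_p` on a tensor product (`q` is the conjugate of `p`). -/
def gpNorm {E G : Type*} [NormedAddCommGroup E] [NormedSpace ℝ E]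
    [NormedAddCommGroup G] [NormedSpace ℝ G] (p q : ℝ) (z : TensorProduct ℝ E G) : ℝ :=
  sInf {r : ℝ | ∃ (m : ℕ) (n : Fin m → E) (h : Fin m → G),
    z = ∑ j, n j ⊗ₜ[ℝ] h j ∧ r = strongLp p n * weakLp q h}

/-- The tensor norm `w_p` (`q` is the conjugate of `p`). -/
def wpNorm {E G : Type*} [NormedAddCommGroup E] [NormedSpace ℝ E]
    [NormedAddCommGroup G] [NormedSpace ℝ G] (p q : ℝ) (z : TensorProduct ℝ E G) : ℝ :=
  sInf {r : ℝ | ∃ (m : ℕ) (n : Fin m → E) (h : Fin m → G),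
    z = ∑ j, n j ⊗ₜ[ℝ] h j ∧ r = weakLp p n * weakLp q h}

/-- `E`, together with the map `δ : Y → E`, is (isometrically) the Lipschitz-free space
of the pointed metric space `(Y, y₀)`: `δ` sends the base point to `0`, is an isometric
embedding, has dense linear span, and the norm of finite combinations of point evaluations
is computed against the unit ball of `Lip₀(Y)`. -/
structure IsFreeSpace (Y : Type*) [MetricSpace Y] (y₀ : Y)
    (E : Type*) [NormedAddCommGroup E] [NormedSpace ℝ E] [CompleteSpace E]
    (δ : Y → E) : Prop where
  map_base : δ y₀ = 0
  isometry : ∀ x y : Y, ‖δ x - δ y‖ = dist x y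
  dense_span : (Submodule.span ℝ (Set.range δ)).topologicalClosure = ⊤
  norm_eq : ∀ (n : ℕ) (a : Fin n → ℝ) (x : Fin n → Y),
    ‖∑ i, a i • δ (x i)‖ =
      sSup {r : ℝ | ∃ s : Y → ℝ, LipschitzWith 1 s ∧ s y₀ = 0 ∧ r = |∑ i, a i * s (x i)|}

end

noncomputable section

variable {Y W FY FW : Type*} [MetricSpace Y] [MetricSpace W]
  [NormedAddCommGroup FY] [NormedSpace ℝ FY] [NormedAddCommGroup FW] [NormedSpace ℝ FW]

/-- `T : Y → W` is MS-Lipschitz `p`-summing (`q` is the conjugate of `p`), the free spaces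
of `Y` and `W` being realized as `FY`, `FW` via `δY`, `δW`.  Elements of `W^# = F(W)^*` are
encoded as elements of `Dual ℝ FW`, and `d_p^L` is the Chevet–Saphar norm computed in
`F(Y) ⊗ W^#`. -/
def MSLipPSumming (p q : ℝ) (δY : Y → FY) (δW : W → FW) (T : Y → W) : Prop :=
  ∃ K > 0, ∀ (k : ℕ) (x y : Fin k → Y) (f : Fin k → StrongDual ℝ FW),
    |∑ l, (f l (δW (T (x l))) - f l (δW (T (y l))))| ≤
      K * dpNorm p q (∑ l, (δY (x l) - δY (y l)) ⊗ₜ[ℝ] f l)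

/-- `T : Y → W` is MS-strongly Lipschitz `p`-summing (`q` is the conjugate of `p`). -/
def MSStronglyLipPSumming (p q : ℝ) (δY : Y → FY) (δW : W → FW) (T : Y → W) : Prop :=
  ∃ K > 0, ∀ (k : ℕ) (x y : Fin k → Y) (f : Fin k → StrongDual ℝ FW),
    |∑ l, (f l (δW (T (x l))) - f l (δW (T (y l))))| ≤
      K * gpNorm p q (∑ l, (δY (x l) - δY (y l)) ⊗ₜ[ℝ] f l)

/-- `T : Y → W` is MS-Lipschitz `p`-nuclear (`q` is the conjugate of `p`). -/
def MSLipPNuclear (p q : ℝ) (δY : Y → FY) (δW : W → FW) (T : Y → W) : Prop :=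
  ∃ K > 0, ∀ (k : ℕ) (x y : Fin k → Y) (f : Fin k → StrongDual ℝ FW),
    |∑ l, (f l (δW (T (x l))) - f l (δW (T (y l))))| ≤
      K * wpNorm p q (∑ l, (δY (x l) - δY (y l)) ⊗ₜ[ℝ] f l)

end
noncomputable section AuxProofs

section AuxLp

variable {E : Type*} [NormedAddCommGroup E] [NormedSpace ℝ E] {p : ℝ} {m : ℕ}

lemma rpowSum_mono (hp : 1 ≤ p) {f g : Fin m → ℝ} (hf : ∀ j, 0 ≤ f j) (h : ∀ j, f j ≤ g j) :
    (∑ j, f j ^ p) ^ (1/p) ≤ (∑ j, g j ^ p) ^ (1/p) := by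
  have hp0 : 0 ≤ p := le_trans zero_le_one hp
  refine Real.rpow_le_rpow (Finset.sum_nonneg fun j _ => Real.rpow_nonneg (hf j) p)
    (Finset.sum_le_sum fun j _ => Real.rpow_le_rpow (hf j) (h j) hp0) (by positivity)

lemma abs_apply_le (φ : StrongDual ℝ E) (hφ : ‖φ‖ ≤ 1) (v : E) : |φ v| ≤ ‖v‖ := by
  calc |φ v| = ‖φ v‖ := rfl
    _ ≤ ‖φ‖ * ‖v‖ := φ.le_opNorm v
    _ ≤ 1 * ‖v‖ := by gcongr
    _ = ‖v‖ := one_mul _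

lemma weakSet_nonempty (p : ℝ) (hp : 1 ≤ p) (x : Fin m → E) :
    Set.Nonempty {r : ℝ | ∃ φ : StrongDual ℝ E, ‖φ‖ ≤ 1 ∧ r = (∑ j, |φ (x j)| ^ p) ^ (1 / p)} :=
  ⟨_, 0, by simp, rfl⟩

lemma weakSet_bddAbove (hp : 1 ≤ p) (x : Fin m → E) :
    BddAbove {r : ℝ | ∃ φ : StrongDual ℝ E, ‖φ‖ ≤ 1 ∧ r = (∑ j, |φ (x j)| ^ p) ^ (1 / p)} := by
  refine ⟨(∑ j, ‖x j‖ ^ p) ^ (1/p), ?_⟩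
  rintro r ⟨φ, hφ, rfl⟩
  exact rpowSum_mono hp (fun j => abs_nonneg _) (fun j => abs_apply_le φ hφ (x j))

lemma le_weakLp (hp : 1 ≤ p) (x : Fin m → E) (φ : StrongDual ℝ E) (hφ : ‖φ‖ ≤ 1) :
    (∑ j, |φ (x j)| ^ p) ^ (1/p) ≤ weakLp p x :=
  le_csSup (weakSet_bddAbove hp x) ⟨φ, hφ, rfl⟩

lemma weakLp_le (hp : 1 ≤ p) (x : Fin m → E) {r : ℝ}
    (hr : ∀ φ : StrongDual ℝ E, ‖φ‖ ≤ 1 → (∑ j, |φ (x j)| ^ p) ^ (1/p) ≤ r) :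
    weakLp p x ≤ r := by
  refine csSup_le (weakSet_nonempty p hp x) ?_
  rintro s ⟨φ, hφ, rfl⟩
  exact hr φ hφ

lemma weakLp_nonneg (hp : 1 ≤ p) (x : Fin m → E) : 0 ≤ weakLp p x := by
  refine le_trans ?_ (le_weakLp hp x 0 (by simp))
  positivity

lemma weakLp_le_strongLp (hp : 1 ≤ p) (x : Fin m → E) : weakLp p x ≤ strongLp p x :=
  weakLp_le hp x fun φ hφ =>
    rpowSum_mono hp (fun j => abs_nonneg _) (fun j => abs_apply_le φ hφ (x j))

lemma strongLp_nonneg (x : Fin m → E) : 0 ≤ strongLp p x := by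
  unfold strongLp; positivity

lemma strongLp_le_const (hp : 1 ≤ p) {x : Fin m → E} {C : ℝ} (hC : 0 ≤ C)
    (h : ∀ j, ‖x j‖ ≤ C) : strongLp p x ≤ C * (m : ℝ) ^ (1/p) := by
  have hp0 : p ≠ 0 := (lt_of_lt_of_le zero_lt_one hp).ne'
  have : strongLp p x ≤ (∑ _j : Fin m, C ^ p) ^ (1/p) :=
    rpowSum_mono hp (fun j => norm_nonneg _) h
  refine this.trans ?_
  rw [Finset.sum_const, Finset.card_univ, Fintype.card_fin, nsmul_eq_mul,
    Real.mul_rpow (by positivity) (by positivity), ← Real.rpow_mul hC,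
    mul_one_div_cancel hp0, Real.rpow_one, mul_comm]

lemma strongLp_add_le (hp : 1 ≤ p) (x y : Fin m → E) :
    strongLp p (fun j => x j + y j) ≤ strongLp p x + strongLp p y := by
  unfold strongLp
  calc (∑ j, ‖x j + y j‖ ^ p) ^ (1/p)
      ≤ (∑ j, |‖x j‖ + ‖y j‖| ^ p) ^ (1/p) := by
        refine rpowSum_mono hp (fun j => norm_nonneg _) (fun j => ?_)
        exact (norm_add_le _ _).trans (le_abs_self _)
    _ ≤ (∑ j, |‖x j‖| ^ p) ^ (1/p) + (∑ j, |‖y j‖| ^ p) ^ (1/p) := Real.Lp_add_le _ _ _ hp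
    _ = (∑ j, ‖x j‖ ^ p) ^ (1/p) + (∑ j, ‖y j‖ ^ p) ^ (1/p) := by
        simp [abs_of_nonneg (norm_nonneg _)]

lemma rpow_smul_sum (hp : 1 ≤ p) {c : ℝ} (hc : 0 ≤ c) (f : Fin m → ℝ) (hf : ∀ j, 0 ≤ f j) :
    (∑ j, (c * f j) ^ p) ^ (1/p) = c * (∑ j, f j ^ p) ^ (1/p) := by
  have hp0 : p ≠ 0 := (lt_of_lt_of_le zero_lt_one hp).ne'
  have h1 : ∀ j, (c * f j) ^ p = c ^ p * f j ^ p := fun j => Real.mul_rpow hc (hf j)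
  simp only [h1, ← Finset.mul_sum]
  rw [Real.mul_rpow (Real.rpow_nonneg hc p)
      (Finset.sum_nonneg fun j _ => Real.rpow_nonneg (hf j) p),
    ← Real.rpow_mul hc, mul_one_div_cancel hp0, Real.rpow_one]

lemma strongLp_smul_le (hp : 1 ≤ p) {c : ℝ} (hc : 0 ≤ c) (x : Fin m → E) :
    strongLp p (fun j => c • x j) ≤ c * strongLp p x := by
  unfold strongLp
  rw [← rpow_smul_sum hp hc _ (fun j => norm_nonneg _)]
  refine rpowSum_mono hp (fun j => norm_nonneg _) (fun j => ?_)
  rw [norm_smul, Real.norm_eq_abs, abs_of_nonneg hc]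

lemma weakLp_smul_le (hp : 1 ≤ p) {c : ℝ} (hc : 0 ≤ c) (x : Fin m → E) :
    weakLp p (fun j => c • x j) ≤ c * weakLp p x := by
  refine weakLp_le hp _ fun φ hφ => ?_
  have h1 : ∀ j, |φ (c • x j)| = c * |φ (x j)| := fun j => by
    rw [map_smul, smul_eq_mul, abs_mul, abs_of_nonneg hc]
  simp only [h1]
  rw [rpow_smul_sum hp hc _ (fun j => abs_nonneg _)]
  exact mul_le_mul_of_nonneg_left (le_weakLp hp x φ hφ) hc

lemma weakLp_add_le (hp : 1 ≤ p) (x y : Fin m → E) :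
    weakLp p (fun j => x j + y j) ≤ weakLp p x + weakLp p y := by
  refine weakLp_le hp _ fun φ hφ => ?_
  simp only [map_add]
  exact (Real.Lp_add_le _ _ _ hp).trans
    (add_le_add (le_weakLp hp x φ hφ) (le_weakLp hp y φ hφ))

end AuxLp

section HB
variable {Y : Type*} [MetricSpace Y] [Inhabited Y] {FY : Type*}
  [NormedAddCommGroup FY] [NormedSpace ℝ FY] [CompleteSpace FY] {δY : Y → FY}

lemma normSet_bddAbove (n : ℕ) (a : Fin n → ℝ) (x : Fin n → Y) :
    BddAbove {r : ℝ | ∃ s : Y → ℝ, LipschitzWith 1 s ∧ s default = 0 ∧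
      r = |∑ i, a i * s (x i)|} := by
  refine ⟨∑ i, |a i| * dist (x i) default, ?_⟩
  rintro r ⟨s, hs, h0, rfl⟩
  calc |∑ i, a i * s (x i)| ≤ ∑ i, |a i * s (x i)| := Finset.abs_sum_le_sum_abs _ _
    _ ≤ ∑ i, |a i| * dist (x i) default := by
        refine Finset.sum_le_sum fun i _ => ?_
        rw [abs_mul]
        refine mul_le_mul_of_nonneg_left ?_ (abs_nonneg _)
        have := hs.dist_le_mul (x i) default
        rw [Real.dist_eq, h0, sub_zero] at this
        simpa using this

/-- Every 1-Lipschitz function vanishing at the base point extends to a norm-one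
functional on the free space. -/
lemma exists_dual_of_lip (hFY : IsFreeSpace Y default FY δY)
    (s : Y → ℝ) (hs : LipschitzWith 1 s) (h0 : s default = 0) :
    ∃ φ : StrongDual ℝ FY, ‖φ‖ ≤ 1 ∧ ∀ x, φ (δY x) = s x := by
  classical
  set G : (Y →₀ ℝ) →ₗ[ℝ] FY := Finsupp.linearCombination ℝ δY with hGdef
  set F : (Y →₀ ℝ) →ₗ[ℝ] ℝ := Finsupp.linearCombination ℝ s with hFdef
  -- point bound
  have hbound : ∀ c : Y →₀ ℝ, |F c| ≤ ‖G c‖ := by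
    intro c
    set n := c.support.card with hn
    set e : {x // x ∈ c.support} ≃ Fin n := c.support.equivFin with he
    set a : Fin n → ℝ := fun i => c ((e.symm i : Y)) with ha
    set x : Fin n → Y := fun i => (e.symm i : Y) with hx
    have hG : G c = ∑ i, a i • δY (x i) := by
      rw [hGdef, Finsupp.linearCombination_apply, Finsupp.sum]
      rw [← Finset.sum_coe_sort c.support (fun y => c y • δY y)]
      rw [← Equiv.sum_comp e.symm (fun u => c (u : Y) • δY (u : Y))]
    have hF : F c = ∑ i, a i * s (x i) := by
      rw [hFdef, Finsupp.linearCombination_apply, Finsupp.sum]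
      rw [← Finset.sum_coe_sort c.support (fun y => c y • s y)]
      rw [← Equiv.sum_comp e.symm (fun u => c (u : Y) • s (u : Y))]
      simp only [smul_eq_mul]
      rfl
    rw [hF, hG, hFY.norm_eq n a x]
    exact le_csSup (normSet_bddAbove n a x) ⟨s, hs, h0, rfl⟩
  have hker : LinearMap.ker G ≤ LinearMap.ker F := by
    intro c hc
    rw [LinearMap.mem_ker] at hc ⊢
    have := hbound c
    rw [hc, norm_zero] at this
    exact abs_eq_zero.mp (le_antisymm this (abs_nonneg _))
  set P : Submodule ℝ FY := Submodule.span ℝ (Set.range δY) with hP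
  have hrange : LinearMap.range G = P := Finsupp.range_linearCombination (R := ℝ) (v := δY)
  set f₁ : P →ₗ[ℝ] ℝ :=
    (((LinearMap.ker G).liftQ F hker) ∘ₗ G.quotKerEquivRange.symm.toLinearMap) ∘ₗ
      (LinearEquiv.ofEq P (LinearMap.range G) hrange.symm).toLinearMap with hf₁
  have hcomp : ∀ (c : Y →₀ ℝ) (h : G c ∈ P), f₁ ⟨G c, h⟩ = F c := by
    intro c h
    have h' : G c ∈ LinearMap.range G := ⟨c, rfl⟩
    have e1 : (LinearEquiv.ofEq P (LinearMap.range G) hrange.symm) ⟨G c, h⟩ = ⟨G c, h'⟩ := rfl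
    simp only [hf₁, LinearMap.comp_apply, LinearEquiv.coe_coe, e1,
      LinearMap.quotKerEquivRange_symm_apply_image]
    rw [show (LinearMap.ker G).mkQ c = Submodule.Quotient.mk c from rfl,
      Submodule.liftQ_apply]
  have hnorm : ∀ z : P, ‖f₁ z‖ ≤ 1 * ‖z‖ := by
    rintro ⟨z, hz⟩
    rw [← hrange] at hz
    obtain ⟨c, rfl⟩ := hz
    rw [hcomp c]
    · rw [one_mul]
      exact hbound c
  set f₂ : P →L[ℝ] ℝ := f₁.mkContinuous 1 hnorm with hf₂
  obtain ⟨φ, hext, hφnorm⟩ := exists_extension_norm_eq P f₂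
  refine ⟨φ, ?_, ?_⟩
  · rw [hφnorm]
    exact f₁.mkContinuous_norm_le zero_le_one hnorm
  · intro x
    have hmem : δY x ∈ P := Submodule.subset_span ⟨x, rfl⟩
    have hGx : G (Finsupp.single x 1) = δY x := by
      simp [hGdef, Finsupp.linearCombination_single]
    have hmem' : G (Finsupp.single x 1) ∈ P := by rw [hGx]; exact hmem
    have h1 : φ (δY x) = f₂ ⟨δY x, hmem⟩ := hext ⟨δY x, hmem⟩
    rw [h1]
    have h2 : f₂ ⟨δY x, hmem⟩ = f₁ ⟨δY x, hmem⟩ := rfl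
    rw [h2]
    have h3 : (⟨δY x, hmem⟩ : P) = ⟨G (Finsupp.single x 1), hmem'⟩ := by
      ext; exact hGx.symm
    rw [h3, hcomp]
    simp [hFdef, Finsupp.linearCombination_single]

/-- Any integer combination of point evaluations is a sum of elementary molecules. -/
lemma exists_molecule (hbase : δY default = 0) :
    ∀ (n : ℕ) (c : Fin n → ℤ) (z : Fin n → Y), ∃ (k : ℕ) (x y : Fin k → Y),
      (∑ l, (δY (x l) - δY (y l))) = ∑ i, (c i : ℝ) • δY (z i) := by
  intro n
  induction n with
  | zero => exact fun c z => ⟨0, Fin.elim0, Fin.elim0, by simp⟩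
  | succ n ih =>
    intro c z
    obtain ⟨k, x, y, hxy⟩ := ih (fun i => c i.succ) (fun i => z i.succ)
    set k0 := (c 0).natAbs with hk0
    refine ⟨k0 + k,
      Fin.append (fun _ => if 0 ≤ c 0 then z 0 else default) x,
      Fin.append (fun _ => if 0 ≤ c 0 then default else z 0) y, ?_⟩
    rw [Fin.sum_univ_add]
    simp only [Fin.append_left, Fin.append_right]
    rw [hxy, Fin.sum_univ_succ]
    congr 1
    rw [Finset.sum_const, Finset.card_univ, Fintype.card_fin]
    by_cases h : 0 ≤ c 0
    · simp only [if_pos h, hbase, sub_zero]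
      rw [← natCast_zsmul, Int.natCast_natAbs, abs_of_nonneg h, Int.cast_smul_eq_zsmul ℝ]
    · simp only [if_neg h, hbase, zero_sub, smul_neg]
      rw [← natCast_zsmul, Int.natCast_natAbs, abs_of_neg (lt_of_not_ge h),
        Int.cast_smul_eq_zsmul ℝ, neg_smul, neg_neg]

/-- Pad a molecule representation to a longer length using the base point. -/
lemma molecule_pad (hbase : δY default = 0) {k k' : ℕ} (hkk : k ≤ k') (x y : Fin k → Y) :
    ∃ x' y' : Fin k' → Y,
      (∑ l, (δY (x' l) - δY (y' l))) = ∑ l, (δY (x l) - δY (y l)) := by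
  refine ⟨fun i => if h : (i : ℕ) < k then x ⟨i, h⟩ else default,
    fun i => if h : (i : ℕ) < k then y ⟨i, h⟩ else default, ?_⟩
  set f : ℕ → FY := fun i => if h : i < k then δY (x ⟨i, h⟩) - δY (y ⟨i, h⟩) else 0 with hf
  have h1 : ∀ (K : ℕ) (hK : K ≤ k') (u : Fin k' → FY), True := fun _ _ _ => trivial
  have hL : (∑ l : Fin k', (δY (if h : (l : ℕ) < k then x ⟨l, h⟩ else default) -
      δY (if h : (l : ℕ) < k then y ⟨l, h⟩ else default))) = ∑ l ∈ Finset.range k', f l := by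
    rw [← Fin.sum_univ_eq_sum_range]
    refine Finset.sum_congr rfl fun l _ => ?_
    by_cases h : (l : ℕ) < k <;> simp [hf, h, hbase]
  have hR : (∑ l, (δY (x l) - δY (y l))) = ∑ l ∈ Finset.range k, f l := by
    rw [← Fin.sum_univ_eq_sum_range]
    refine Finset.sum_congr rfl fun l _ => ?_
    simp [hf, l.isLt]
  rw [hL, hR]
  refine (Finset.sum_subset (Finset.range_subset_range.mpr hkk) fun i _ hi => ?_).symm
  rw [Finset.mem_range, not_lt] at hi
  simp [hf, Nat.not_lt.mpr hi]

end HB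

section SetEq
variable {Y : Type*} [MetricSpace Y] [Inhabited Y] {FY : Type*}
  [NormedAddCommGroup FY] [NormedSpace ℝ FY] [CompleteSpace FY] {δY : Y → FY}

/-- The function induced by a norm-one functional is 1-Lipschitz. -/
lemma lipschitz_of_dual (hFY : IsFreeSpace Y default FY δY) (φ : StrongDual ℝ FY)
    (hφ : ‖φ‖ ≤ 1) : LipschitzWith 1 (fun z => φ (δY z)) := by
  refine LipschitzWith.of_dist_le_mul fun a b => ?_
  rw [Real.dist_eq, ← map_sub]
  calc |φ (δY a - δY b)| ≤ ‖δY a - δY b‖ := abs_apply_le φ hφ _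
    _ = dist a b := hFY.isometry a b
    _ = 1 * dist a b := (one_mul _).symm

lemma lipset_eq_dualset (hFY : IsFreeSpace Y default FY δY) {p : ℝ}
    {m₁ m₂ : ℕ} (x y : Fin m₁ → Fin m₂ → Y) :
    {r : ℝ | ∃ s : Y → ℝ, LipschitzWith 1 s ∧ s default = 0 ∧
      r = (∑ j, |∑ i, (s (x j i) - s (y j i))| ^ p) ^ (1 / p)} =
    {r : ℝ | ∃ φ : StrongDual ℝ FY, ‖φ‖ ≤ 1 ∧
      r = (∑ j, |φ ((fun j => ∑ i, (δY (x j i) - δY (y j i))) j)| ^ p) ^ (1 / p)} := by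
  have key : ∀ (φ : StrongDual ℝ FY) (s : Y → ℝ), (∀ w, φ (δY w) = s w) → ∀ j,
      φ (∑ i, (δY (x j i) - δY (y j i))) = ∑ i, (s (x j i) - s (y j i)) := by
    intro φ s hφs j
    rw [map_sum]
    exact Finset.sum_congr rfl fun i _ => by rw [map_sub, hφs, hφs]
  ext r
  simp only [Set.mem_setOf_eq]
  constructor
  · rintro ⟨s, hs, h0, rfl⟩
    obtain ⟨φ, hφ, hφs⟩ := exists_dual_of_lip hFY s hs h0
    exact ⟨φ, hφ, by simp only [key φ s hφs]⟩
  · rintro ⟨φ, hφ, rfl⟩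
    refine ⟨fun z => φ (δY z), lipschitz_of_dual hFY φ hφ,
      by simp [hFY.map_base], ?_⟩
    simp only [key φ (fun z => φ (δY z)) (fun _ => rfl)]

/-- Approximation of an arbitrary element of the free space by rescaled integer
combinations of point evaluations, with arbitrarily large denominators. -/
lemma exists_approx (hFY : IsFreeSpace Y default FY δY) (z : FY) {η : ℝ} (hη : 0 < η) :
    ∃ D0 : ℕ, 0 < D0 ∧ ∀ D : ℕ, D0 ≤ D → ∃ (n : ℕ) (c : Fin n → ℤ) (zz : Fin n → Y),
      ‖z - (D : ℝ)⁻¹ • ∑ i, (c i : ℝ) • δY (zz i)‖ < η := by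
  classical
  have hdense : Dense ((Submodule.span ℝ (Set.range δY) : Submodule ℝ FY) : Set FY) := by
    rw [Submodule.dense_iff_topologicalClosure_eq_top]
    exact hFY.dense_span
  obtain ⟨w, hwmem, hwz⟩ := hdense.exists_dist_lt z (half_pos hη)
  obtain ⟨n, a, g, hw⟩ := Submodule.mem_span_set'.mp hwmem
  set zz : Fin n → Y := fun i => (g i).2.choose with hzz
  have hgz : ∀ i, δY (zz i) = (g i : FY) := fun i => (g i).2.choose_spec
  set B : ℝ := ∑ i, ‖δY (zz i)‖ with hB
  have hBnn : 0 ≤ B := Finset.sum_nonneg fun i _ => norm_nonneg _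
  obtain ⟨D0, hD0⟩ := exists_nat_gt ((B + 1) * 2 / η)
  refine ⟨D0 + 1, Nat.succ_pos _, fun D hD => ?_⟩
  have hDD0 : ((B + 1) * 2) / η < (D : ℝ) := by
    refine lt_of_lt_of_le hD0 ?_
    have : (D0 : ℝ) + 1 ≤ D := by exact_mod_cast hD
    linarith
  have hDpos : (0 : ℝ) < D := lt_of_le_of_lt (by positivity) hDD0
  have hBD : (B + 1) * 2 < D * η := by
    rw [div_lt_iff₀ hη] at hDD0
    linarith
  refine ⟨n, fun i => round (a i * D), zz, ?_⟩
  set u : FY := (D : ℝ)⁻¹ • ∑ i, ((round (a i * D) : ℝ)) • δY (zz i) with hu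
  have happrox : ‖w - u‖ < η / 2 := by
    have hwsum : w = ∑ i, a i • δY (zz i) := by
      rw [← hw]; exact (Finset.sum_congr rfl fun i _ => by rw [hgz]).symm
    rw [hu, hwsum, Finset.smul_sum, ← Finset.sum_sub_distrib]
    have hterm : ∀ i, a i • δY (zz i) - (D:ℝ)⁻¹ • ((round (a i * D) : ℝ)) • δY (zz i) =
        (a i - (round (a i * D) : ℝ) / D) • δY (zz i) := by
      intro i
      rw [smul_smul, ← sub_smul]
      congr 1
      rw [div_eq_inv_mul]
    calc ‖∑ i, (a i • δY (zz i) - (D:ℝ)⁻¹ • ((round (a i * D) : ℝ)) • δY (zz i))‖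
        ≤ ∑ i, ‖a i • δY (zz i) - (D:ℝ)⁻¹ • ((round (a i * D) : ℝ)) • δY (zz i)‖ :=
          norm_sum_le _ _
      _ ≤ ∑ i, (D:ℝ)⁻¹ * ‖δY (zz i)‖ := by
          refine Finset.sum_le_sum fun i _ => ?_
          rw [hterm i, norm_smul, Real.norm_eq_abs]
          refine mul_le_mul_of_nonneg_right ?_ (norm_nonneg _)
          have h1 : |a i - (round (a i * D) : ℝ) / D| = |a i * D - round (a i * D)| / D := by
            rw [show a i - (round (a i * D) : ℝ) / D = (a i * D - round (a i * D)) / D by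
              field_simp, abs_div, abs_of_pos hDpos]
          rw [h1]
          calc |a i * (D:ℝ) - round (a i * (D:ℝ))| / D ≤ (1/2) / D :=
                (div_le_div_iff_of_pos_right hDpos).mpr (abs_sub_round _)
            _ ≤ 1 / D := (div_le_div_iff_of_pos_right hDpos).mpr (by norm_num)
            _ = (D:ℝ)⁻¹ := one_div _
      _ = (D:ℝ)⁻¹ * B := by rw [hB, Finset.mul_sum]
      _ < η / 2 := by
          rw [inv_mul_eq_div, div_lt_iff₀ hDpos]
          nlinarith
  have hsplit : z - u = (z - w) + (w - u) := by abel
  rw [hsplit]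
  refine lt_of_le_of_lt (norm_add_le _ _) ?_
  rw [dist_eq_norm] at hwz
  linarith

end SetEq

end AuxProofs

/-- Theorem 2.5, (2) ⇔ (4): `T̃` is `p`-summing iff inequality (2.5) holds. -/
theorem linearization_pSumming_iff_summing_inequality
    {Y W FY FW : Type*} [MetricSpace Y] [Inhabited Y] [MetricSpace W] [Inhabited W]
    [NormedAddCommGroup FY] [NormedSpace ℝ FY] [CompleteSpace FY]
    [NormedAddCommGroup FW] [NormedSpace ℝ FW] [CompleteSpace FW]
    {δY : Y → FY} {δW : W → FW}
    (hFY : IsFreeSpace Y default FY δY) (hFW : IsFreeSpace W default FW δW)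
    {p : ℝ} (hp : 1 ≤ p)
    (T : Y → W) (hTlip : ∃ K, LipschitzWith K T) (hT0 : T default = default)
    (Tt : FY →L[ℝ] FW) (hTt : ∀ x, Tt (δY x) = δW (T x)) :
    IsPSumming p Tt ↔
      ∃ K > 0, ∀ (m₁ m₂ : ℕ) (x y : Fin m₁ → Fin m₂ → Y),
        (∑ j, ‖∑ i, (δW (T (x j i)) - δW (T (y j i)))‖ ^ p) ^ (1 / p) ≤
          K * sSup {r : ℝ | ∃ s : Y → ℝ, LipschitzWith 1 s ∧ s default = 0 ∧
            r = (∑ j, |∑ i, (s (x j i) - s (y j i))| ^ p) ^ (1 / p)} := by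
  have hp0 : (0 : ℝ) < p := lt_of_lt_of_le zero_lt_one hp
  have hTtmol : ∀ (m₁ m₂ : ℕ) (x y : Fin m₁ → Fin m₂ → Y) (j : Fin m₁),
      Tt (∑ i, (δY (x j i) - δY (y j i))) = ∑ i, (δW (T (x j i)) - δW (T (y j i))) := by
    intro m₁ m₂ x y j
    rw [map_sum]
    exact Finset.sum_congr rfl fun i _ => by rw [map_sub, hTt, hTt]
  constructor
  · rintro ⟨K, hK0, hK⟩
    refine ⟨K, hK0, fun m₁ m₂ x y => ?_⟩
    rw [lipset_eq_dualset hFY (p := p) x y]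
    have h2 : (fun j => ∑ i, (δW (T (x j i)) - δW (T (y j i)))) =
        fun j => Tt (∑ i, (δY (x j i) - δY (y j i))) :=
      funext fun j => (hTtmol m₁ m₂ x y j).symm
    show strongLp p (fun j => ∑ i, (δW (T (x j i)) - δW (T (y j i)))) ≤
      K * weakLp p (fun j => ∑ i, (δY (x j i) - δY (y j i)))
    rw [h2]
    exact hK m₁ _
  · rintro ⟨K, hK0, hK⟩
    refine ⟨K, hK0, fun m v => ?_⟩
    -- the molecule inequality
    have hmolkey : ∀ (m₂ : ℕ) (x y : Fin m → Fin m₂ → Y),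
        strongLp p (fun j => Tt (∑ i, (δY (x j i) - δY (y j i)))) ≤
          K * weakLp p (fun j => ∑ i, (δY (x j i) - δY (y j i))) := by
      intro m₂ x y
      have h1 := hK m m₂ x y
      rw [lipset_eq_dualset hFY (p := p) x y] at h1
      have h2 : (fun j => Tt (∑ i, (δY (x j i) - δY (y j i)))) =
          fun j => ∑ i, (δW (T (x j i)) - δW (T (y j i))) :=
        funext fun j => hTtmol m m₂ x y j
      rw [h2]
      exact h1
    refine le_of_forall_pos_le_add fun ε hε => ?_
    have hKT : (0:ℝ) ≤ K + ‖Tt‖ + 1 := by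
      have := norm_nonneg Tt; linarith
    have hA : (0:ℝ) ≤ (K + ‖Tt‖ + 1) * ((m : ℝ) ^ (1/p)) :=
      mul_nonneg hKT (Real.rpow_nonneg (Nat.cast_nonneg m) _)
    set A : ℝ := (K + ‖Tt‖ + 1) * ((m : ℝ) ^ (1/p)) with hAdef
    set η : ℝ := ε / (A + 1) with hηdef
    have hηpos : 0 < η := div_pos hε (by linarith)
    choose D0 hD0pos hD0 using fun j : Fin m => exists_approx hFY (v j) hηpos
    set D : ℕ := (∑ j, D0 j) + 1 with hDdef
    have hDge : ∀ j, D0 j ≤ D := fun j =>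
      le_trans (Finset.single_le_sum (fun j _ => Nat.zero_le _) (Finset.mem_univ j))
        (Nat.le_succ _)
    choose n c zz hzz using fun j => hD0 j D (hDge j)
    have hDpos : (0:ℝ) < D := by
      have : 0 < D := Nat.succ_pos _
      exact_mod_cast this
    choose k xx yy hxy using fun j =>
      exists_molecule hFY.map_base (n j) (c j) (zz j)
    have hkle : ∀ j, k j ≤ ∑ j', k j' :=
      fun j => Finset.single_le_sum (fun j' _ => Nat.zero_le _) (Finset.mem_univ j)
    have hpad : ∀ j, ∃ x' y' : Fin (∑ j', k j') → Y,
        (∑ l, (δY (x' l) - δY (y' l))) = ∑ i, (c j i : ℝ) • δY (zz j i) := by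
      intro j
      obtain ⟨x', y', h⟩ := molecule_pad hFY.map_base (hkle j) (xx j) (yy j)
      exact ⟨x', y', h.trans (hxy j)⟩
    choose X YY hX using hpad
    -- the scaled molecules approximate v
    have hvu : ∀ j, ‖v j - (D:ℝ)⁻¹ • ∑ i, (δY (X j i) - δY (YY j i))‖ < η := by
      intro j
      rw [hX j]
      exact hzz j
    -- step 1: split
    have step1 : strongLp p (fun j => Tt (v j)) ≤
        strongLp p (fun j => Tt ((D:ℝ)⁻¹ • ∑ i, (δY (X j i) - δY (YY j i)))) +
        strongLp p (fun j => Tt (v j - (D:ℝ)⁻¹ • ∑ i, (δY (X j i) - δY (YY j i)))) := by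
      have h1 : (fun j => Tt (v j)) = fun j =>
          Tt ((D:ℝ)⁻¹ • ∑ i, (δY (X j i) - δY (YY j i))) +
          Tt (v j - (D:ℝ)⁻¹ • ∑ i, (δY (X j i) - δY (YY j i))) := funext fun j => by
        rw [← map_add]
        congr 1
        abel
      rw [h1]
      exact strongLp_add_le hp _ _
    -- step 2: error term
    have step2 : strongLp p (fun j => Tt (v j - (D:ℝ)⁻¹ •
        ∑ i, (δY (X j i) - δY (YY j i)))) ≤ (‖Tt‖ * η) * (m:ℝ) ^ (1/p) := by
      refine strongLp_le_const hp (mul_nonneg (norm_nonneg _) hηpos.le) fun j => ?_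
      calc ‖Tt (v j - (D:ℝ)⁻¹ • ∑ i, (δY (X j i) - δY (YY j i)))‖
          ≤ ‖Tt‖ * ‖v j - (D:ℝ)⁻¹ • ∑ i, (δY (X j i) - δY (YY j i))‖ := Tt.le_opNorm _
        _ ≤ ‖Tt‖ * η := mul_le_mul_of_nonneg_left (hvu j).le (norm_nonneg _)
    -- step 3: main term
    have hDinv : (0:ℝ) ≤ (D:ℝ)⁻¹ := inv_nonneg.mpr hDpos.le
    have step3 : strongLp p (fun j => Tt ((D:ℝ)⁻¹ •
        ∑ i, (δY (X j i) - δY (YY j i)))) ≤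
        K * weakLp p (fun j => (D:ℝ)⁻¹ • ∑ i, (δY (X j i) - δY (YY j i))) := by
      have h1 : (fun j => Tt ((D:ℝ)⁻¹ • ∑ i, (δY (X j i) - δY (YY j i)))) =
          fun j => (D:ℝ)⁻¹ • Tt (∑ i, (δY (X j i) - δY (YY j i))) :=
        funext fun j => by rw [map_smul]
      rw [h1]
      have h2 : weakLp p (fun j => (D:ℝ) • ((D:ℝ)⁻¹ •
          ∑ i, (δY (X j i) - δY (YY j i)))) ≤
          (D:ℝ) * weakLp p (fun j => (D:ℝ)⁻¹ • ∑ i, (δY (X j i) - δY (YY j i))) :=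
        weakLp_smul_le hp hDpos.le _
      have h3 : (fun j => (D:ℝ) • ((D:ℝ)⁻¹ • ∑ i, (δY (X j i) - δY (YY j i)))) =
          fun j => ∑ i, (δY (X j i) - δY (YY j i)) := funext fun j => by
        rw [smul_smul, mul_inv_cancel₀ (ne_of_gt hDpos), one_smul]
      rw [h3] at h2
      calc strongLp p (fun j => (D:ℝ)⁻¹ • Tt (∑ i, (δY (X j i) - δY (YY j i))))
          ≤ (D:ℝ)⁻¹ * strongLp p (fun j => Tt (∑ i, (δY (X j i) - δY (YY j i)))) :=
            strongLp_smul_le hp hDinv _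
        _ ≤ (D:ℝ)⁻¹ * (K * weakLp p (fun j => ∑ i, (δY (X j i) - δY (YY j i)))) :=
            mul_le_mul_of_nonneg_left (hmolkey _ X YY) hDinv
        _ ≤ (D:ℝ)⁻¹ * (K * ((D:ℝ) * weakLp p (fun j => (D:ℝ)⁻¹ •
              ∑ i, (δY (X j i) - δY (YY j i))))) := by
            refine mul_le_mul_of_nonneg_left (mul_le_mul_of_nonneg_left h2 hK0.le) hDinv
        _ = K * weakLp p (fun j => (D:ℝ)⁻¹ • ∑ i, (δY (X j i) - δY (YY j i))) := by
            field_simp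
    -- step 4: weak norm comparison
    have step4 : weakLp p (fun j => (D:ℝ)⁻¹ • ∑ i, (δY (X j i) - δY (YY j i))) ≤
        weakLp p v + η * (m:ℝ) ^ (1/p) := by
      have h1 : (fun j => (D:ℝ)⁻¹ • ∑ i, (δY (X j i) - δY (YY j i))) =
          fun j => v j + (((D:ℝ)⁻¹ • ∑ i, (δY (X j i) - δY (YY j i))) - v j) :=
        funext fun j => by abel
      rw [h1]
      refine (weakLp_add_le hp _ _).trans (add_le_add_right ?_ _)
      refine (weakLp_le_strongLp hp _).trans ?_
      refine strongLp_le_const hp hηpos.le fun j => ?_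
      rw [norm_sub_rev]
      exact (hvu j).le
    -- combine
    have hfinal : A * η ≤ ε := by
      rw [hηdef]
      rw [div_eq_inv_mul, ← mul_assoc]
      have h1 : A * (A + 1)⁻¹ ≤ 1 := by
        rw [← div_eq_mul_inv, div_le_one (by linarith)]
        linarith
      calc A * (A + 1)⁻¹ * ε ≤ 1 * ε := mul_le_mul_of_nonneg_right h1 hε.le
        _ = ε := one_mul _
    calc strongLp p (fun j => Tt (v j))
        ≤ K * (weakLp p v + η * (m:ℝ) ^ (1/p)) + (‖Tt‖ * η) * (m:ℝ) ^ (1/p) := by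
          refine step1.trans (add_le_add (step3.trans ?_) step2)
          exact mul_le_mul_of_nonneg_left step4 hK0.le
      _ = K * weakLp p v + (K + ‖Tt‖) * ((m:ℝ) ^ (1/p)) * η := by ring
      _ ≤ K * weakLp p v + A * η := by
          refine add_le_add_right ?_ _
          refine mul_le_mul_of_nonneg_right ?_ hηpos.le
          rw [hAdef]
          refine mul_le_mul_of_nonneg_right ?_ (Real.rpow_nonneg (Nat.cast_nonneg m) _)
          linarith
      _ ≤ K * weakLp p v + ε := add_le_add_right hfinal _
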